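/- For every n ≥ 0 and every m ≥ 1, the following map is a bijection onto 𝒢(n+1,m): its domain is the set of pairs (S, c) with S ∈ 𝒢(n,m) and c either an element k of {1,…,m} or an element (I,J) of S; the pair (S, k) is sent to S ∪ {({n+1},{k})}, and the pair (S, (I,J)) is sent to (S ∖ {(I,J)}) ∪ {(I ∪ {n+1}, J)}. In particular, the cardinality of 𝒢(n+1,m) equals ∑_{S ∈ 𝒢(n,m)} (m + |S|). -/

import Mathlib

/-- The bipartite adjacency: a black vertex `(I,J) ∈ S` is adjacent to a circle vertex
`j : Fin m` exactly when `j ∈ J`. -/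
def bipAdj {n m : ℕ} (S : Finset (Finset (Fin n) × Finset (Fin m)))
    (v w : {p // p ∈ S} ⊕ Fin m) : Prop :=
  ∃ (p : {p // p ∈ S}) (j : Fin m), j ∈ p.val.2 ∧
    ((v = Sum.inl p ∧ w = Sum.inr j) ∨ (v = Sum.inr j ∧ w = Sum.inl p))

/-- The bipartite graph on the disjoint union of the black vertices `S` and the circle
vertices `Fin m`. -/
def bipGraph {n m : ℕ} (S : Finset (Finset (Fin n) × Finset (Fin m))) :
    SimpleGraph ({p // p ∈ S} ⊕ Fin m) where
  Adj := bipAdj S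
  symm := by
    constructor
    rintro v w ⟨p, j, hj, ⟨h1, h2⟩ | ⟨h1, h2⟩⟩
    · exact ⟨p, j, hj, Or.inr ⟨h2, h1⟩⟩
    · exact ⟨p, j, hj, Or.inl ⟨h2, h1⟩⟩
  loopless := by
    constructor
    rintro v ⟨p, j, hj, ⟨h1, h2⟩ | ⟨h1, h2⟩⟩ <;> simp_all

/-- The set `𝒢(n,m)` of trees of Definition 4.1, encoded as the set of their black
vertices: a finite set `S` of pairs `(I,J)` with `I ⊆ {1,…,n}`, `J ⊆ {1,…,m}`, such that
every black vertex has valence `≥ 2`, the first components are pairwise disjoint with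
union `{1,…,n}`, and the associated bipartite graph is a tree. -/
def Gset (n m : ℕ) : Set (Finset (Finset (Fin n) × Finset (Fin m))) :=
  {S | (∀ p ∈ S, 2 ≤ p.1.card + p.2.card) ∧
    (S : Set (Finset (Fin n) × Finset (Fin m))).PairwiseDisjoint Prod.fst ∧
    S.biUnion Prod.fst = Finset.univ ∧
    (bipGraph S).IsTree}

/-- Lift a black vertex over `Fin n` to one over `Fin (n+1)` along `Fin.castSucc`. -/
def liftBV {n m : ℕ} (p : Finset (Fin n) × Finset (Fin m)) :
    Finset (Fin (n + 1)) × Finset (Fin m) :=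
  (p.1.image Fin.castSucc, p.2)

/-- Attach the new box vertex labelled `n+1` to a tree `S ∈ 𝒢(n,m)`: either to a circle
vertex `k` via a new two-valent black vertex, or to an existing black vertex `(I,J) ∈ S`. -/
def attachBox {n m : ℕ}
    (x : Finset (Finset (Fin n) × Finset (Fin m)) ×
      (Fin m ⊕ (Finset (Fin n) × Finset (Fin m)))) :
    Finset (Finset (Fin (n + 1)) × Finset (Fin m)) :=
  match x.2 with
  | Sum.inl k => insert ({Fin.last n}, {k}) (x.1.image liftBV)
  | Sum.inr p =>
      insert (insert (Fin.last n) (p.1.image Fin.castSucc), p.2)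
        ((x.1.erase p).image liftBV)

open SimpleGraph


variable {V W : Type*}

theorem isTree_iff_of_equiv (G : SimpleGraph V) (H : SimpleGraph W) (e : V ≃ W)
    (hadj : ∀ v w, G.Adj v w ↔ H.Adj (e v) (e w)) : G.IsTree ↔ H.IsTree := by
  have hIso : G ≃g H := ⟨e, fun {a b} => (hadj a b).symm⟩
  constructor
  · intro hG
    refine ⟨(Iso.connected_iff hIso).1 hG.1, ?_⟩
    intro v c hc
    exact hG.2 (c.map hIso.symm.toHom) (hc.map (hIso.symm.toEquiv.injective))
  · intro hH
    refine ⟨(Iso.connected_iff hIso).2 hH.1, ?_⟩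
    intro v c hc
    exact hH.2 (c.map hIso.toHom) (hc.map (hIso.toEquiv.injective))
lemma walk_pull {G : SimpleGraph V} {H : SimpleGraph (Option V)}
    (hss : ∀ a b, H.Adj (some a) (some b) ↔ G.Adj a b)
    {x y : Option V} (w : H.Walk x y) :
    none ∉ w.support → ∀ a b (hx : x = some a) (hy : y = some b),
      ∃ g : G.Walk a b, w.copy hx hy
        = g.map ⟨some, fun {u v} h => (hss u v).2 h⟩ := by
  induction w with
  | nil =>
    intro _ a b hx hy
    subst hx; cases hy
    exact ⟨SimpleGraph.Walk.nil, rfl⟩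
  | @cons x z y h w ih =>
    intro hsupp a b hx hy
    subst hx; subst hy
    simp only [SimpleGraph.Walk.support_cons, List.mem_cons] at hsupp
    push_neg at hsupp
    obtain ⟨hxn, hsupp⟩ := hsupp
    have hz : z ≠ none := fun hz => hsupp (hz ▸ w.start_mem_support)
    obtain ⟨c, rfl⟩ := Option.ne_none_iff_exists'.1 hz
    obtain ⟨g, hg⟩ := ih hsupp c b rfl rfl
    refine ⟨SimpleGraph.Walk.cons ((hss a c).1 h) g, ?_⟩
    simp only [SimpleGraph.Walk.copy_rfl_rfl] at hg ⊢
    simp [SimpleGraph.Walk.map_cons, hg]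

/-- A non-nil walk ending at `none` uses an edge at `none`. -/
lemma edge_at_none {H : SimpleGraph (Option V)} {x : Option V} (w : H.Walk x none)
    (hw : ¬ w.Nil) : ∃ z, H.Adj none z ∧ s(none, z) ∈ w.edges := by
  have hrev : ¬ w.reverse.Nil := by
    rwa [SimpleGraph.Walk.nil_iff_length_eq, SimpleGraph.Walk.length_reverse,
      ← SimpleGraph.Walk.nil_iff_length_eq]
  rw [SimpleGraph.Walk.not_nil_iff] at hrev
  obtain ⟨z, h, q, hq⟩ := hrev
  refine ⟨z, h, ?_⟩
  have : s(none, z) ∈ w.reverse.edges := by rw [hq]; simp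
  rwa [SimpleGraph.Walk.edges_reverse, List.mem_reverse] at this

/-- Pendant lemma: attaching a new vertex `none` of degree one (adjacent only to
`some u₀`) preserves and reflects tree-ness. -/
theorem isTree_option_pendant [Nonempty V] {G : SimpleGraph V} {H : SimpleGraph (Option V)}
    (u₀ : V) (hss : ∀ a b, H.Adj (some a) (some b) ↔ G.Adj a b)
    (hn : ∀ x, H.Adj none x ↔ x = some u₀) : H.IsTree ↔ G.IsTree := by
  classical
  let homUp : G →g H := ⟨some, fun {u v} h => (hss u v).2 h⟩
  constructor
  · intro hH
    constructor
    · -- connected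
      constructor
      intro a b
      have hr : H.Reachable (some a) (some b) := hH.1.preconnected _ _
      obtain ⟨w⟩ := hr
      -- collapse: induction on walk
      have key : ∀ {x y : Option V} (w : H.Walk x y),
          G.Reachable (x.getD u₀) (y.getD u₀) := by
        intro x y w
        induction w with
        | nil => exact SimpleGraph.Reachable.refl _
        | @cons x z y h _ ih =>
          refine SimpleGraph.Reachable.trans ?_ ih
          match x, z with
          | some a, some c => exact ((hss a c).1 h).reachable
          | none, z =>
            have := (hn z).1 h
            subst this
            exact SimpleGraph.Reachable.refl _
          | some a, none =>
            have : H.Adj none (some a) := h.symm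
            have := (hn _).1 this
            simp only [Option.some_inj] at this
            subst this
            exact SimpleGraph.Reachable.refl _
      simpa using key w
    · -- acyclic
      intro v c hc
      exact hH.2 (c.map homUp) (hc.map (fun a b h => Option.some_injective V h))
  · intro hG
    have up : ∀ {a b : V}, G.Walk a b → H.Reachable (some a) (some b) := by
      intro a b w
      induction w with
      | nil => exact SimpleGraph.Reachable.refl _
      | @cons a c _ h _ ih =>
        exact SimpleGraph.Reachable.trans ((hss a c).2 h).reachable ih
    constructor
    · constructor
      intro x y
      have base : ∀ z : Option V, H.Reachable z (some u₀) := by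
        intro z
        match z with
        | none => exact ((hn (some u₀)).2 rfl).reachable
        | some a =>
          obtain ⟨w⟩ := hG.1.preconnected a u₀
          exact up w
      exact (base x).trans (base y).symm
    · intro v c hc
      by_cases hnone : (none : Option V) ∈ c.support
      · -- rotate the cycle to be based at none, derive contradiction
        have hc' : (c.rotate none hnone).IsCycle := hc.rotate hnone
        set c' := c.rotate none hnone with hc'def
        have hnil : ¬ c'.Nil := hc'.not_nil
        rw [SimpleGraph.Walk.not_nil_iff] at hnil
        obtain ⟨z, hadj, q, hq⟩ := hnil
        have hz : z = some u₀ := (hn z).1 hadj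
        subst hz
        rw [hq] at hc'
        rw [SimpleGraph.Walk.cons_isCycle_iff] at hc'
        obtain ⟨hpath, hne⟩ := hc'
        have hqnil : ¬ q.Nil := by
          intro hnil
          have := hnil.eq
          simp at this
        obtain ⟨z', hadj', hmem⟩ := edge_at_none q hqnil
        have hz' : z' = some u₀ := (hn z').1 hadj'
        subst hz'
        exact hne hmem
      · have hv : v ≠ none := fun hv => hnone (hv ▸ c.start_mem_support)
        obtain ⟨a, rfl⟩ := Option.ne_none_iff_exists'.1 hv
        obtain ⟨g, hg⟩ := walk_pull hss c hnone a a rfl rfl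
        rw [SimpleGraph.Walk.copy_rfl_rfl] at hg
        refine hG.2 g ?_
        exact (SimpleGraph.Walk.map_isCycle_iff_of_injective
          (Option.some_injective V)).1 (hg ▸ hc)

/-! ### Simp lemmas for `bipAdj` -/

section BipAdj
variable {n m : ℕ} {S : Finset (Finset (Fin n) × Finset (Fin m))}

@[simp] lemma bipAdj_inl_inr {p : {p // p ∈ S}} {j : Fin m} :
    bipAdj S (Sum.inl p) (Sum.inr j) ↔ j ∈ p.val.2 := by
  constructor
  · rintro ⟨p', j', hj', ⟨h1, h2⟩ | ⟨h1, h2⟩⟩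
    · cases h1; cases h2; exact hj'
    · exact absurd h1 (by simp)
  · intro h; exact ⟨p, j, h, Or.inl ⟨rfl, rfl⟩⟩

@[simp] lemma bipAdj_inr_inl {p : {p // p ∈ S}} {j : Fin m} :
    bipAdj S (Sum.inr j) (Sum.inl p) ↔ j ∈ p.val.2 := by
  constructor
  · rintro ⟨p', j', hj', ⟨h1, h2⟩ | ⟨h1, h2⟩⟩
    · exact absurd h1 (by simp)
    · cases h1; cases h2; exact hj'
  · intro h; exact ⟨p, j, h, Or.inr ⟨rfl, rfl⟩⟩

@[simp] lemma bipAdj_inl_inl {p q : {p // p ∈ S}} :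
    ¬ bipAdj S (Sum.inl p) (Sum.inl q) := by
  rintro ⟨p', j', hj', ⟨h1, h2⟩ | ⟨h1, h2⟩⟩ <;> simp_all

@[simp] lemma bipAdj_inr_inr {i j : Fin m} :
    ¬ bipAdj S (Sum.inr i) (Sum.inr j) := by
  rintro ⟨p', j', hj', ⟨h1, h2⟩ | ⟨h1, h2⟩⟩ <;> simp_all

lemma bipGraph_adj (v w : {p // p ∈ S} ⊕ Fin m) :
    (bipGraph S).Adj v w ↔ bipAdj S v w := Iff.rfl

end BipAdj

/-! ### Tree-ness of `bipGraph` only depends on the second components -/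

theorem bip_tree_congr {n n' m : ℕ} {S : Finset (Finset (Fin n) × Finset (Fin m))}
    {T : Finset (Finset (Fin n') × Finset (Fin m))}
    (φ : {p // p ∈ S} ≃ {q // q ∈ T}) (hsnd : ∀ p, (φ p).val.2 = p.val.2) :
    (bipGraph S).IsTree ↔ (bipGraph T).IsTree := by
  refine isTree_iff_of_equiv _ _ (Equiv.sumCongr φ (Equiv.refl _)) ?_
  rintro (p | i) (q | j) <;>
    simp [bipGraph_adj, hsnd]

/-- Equivalence of subtypes induced by an injective image. -/
noncomputable def eqvOfImage {α β : Type*} [DecidableEq β] {S : Finset α} {T : Finset β}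
    {f : α → β} (hinj : Set.InjOn f S) (himg : S.image f = T) :
    {p // p ∈ S} ≃ {q // q ∈ T} :=
  Equiv.ofBijective (fun p => ⟨f p.val, himg ▸ Finset.mem_image_of_mem f p.2⟩)
    ⟨fun a b hab => Subtype.ext (hinj a.2 b.2 (congrArg Subtype.val hab)),
     fun q => by
      have : q.val ∈ S.image f := himg ▸ q.2
      obtain ⟨p, hp, hpq⟩ := Finset.mem_image.1 this
      exact ⟨⟨p, hp⟩, Subtype.ext hpq⟩⟩

@[simp] lemma eqvOfImage_apply {α β : Type*} [DecidableEq β] {S : Finset α} {T : Finset β}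
    {f : α → β} (hinj : Set.InjOn f S) (himg : S.image f = T) (p : {p // p ∈ S}) :
    (eqvOfImage hinj himg p).val = f p.val := rfl
section Part2
variable {n m : ℕ}

/-- In a tree with at least one circle vertex, every black vertex has a circle neighbour. -/
lemma snd_nonempty_of_tree (hm : 1 ≤ m) {T : Finset (Finset (Fin n) × Finset (Fin m))}
    (hT : (bipGraph T).IsTree) : ∀ q ∈ T, q.2.Nonempty := by
  intro q hq
  obtain ⟨w⟩ := hT.1.preconnected (Sum.inl ⟨q, hq⟩) (Sum.inr ⟨0, hm⟩)
  cases w with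
  | cons h _ =>
    rcases h with ⟨p, j, hj, ⟨h1, h2⟩ | ⟨h1, h2⟩⟩
    · cases h1; exact ⟨j, hj⟩
    · exact absurd h1 (by simp)

/-- In a tree, two distinct black vertices cannot share two circle neighbours;
in particular they cannot have equal second components of size `≥ 2`. -/
lemma snd_ne_of_tree {T : Finset (Finset (Fin n) × Finset (Fin m))}
    (hT : (bipGraph T).IsTree) {p r : Finset (Fin n) × Finset (Fin m)}
    (hp : p ∈ T) (hr : r ∈ T) (hne : p ≠ r) (hJ : p.2 = r.2) (h2 : 2 ≤ p.2.card) :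
    False := by
  obtain ⟨j₁, hj₁, j₂, hj₂, hjne⟩ := Finset.one_lt_card.1 h2
  have hj₁' : j₁ ∈ r.2 := hJ ▸ hj₁
  have hj₂' : j₂ ∈ r.2 := hJ ▸ hj₂
  have hne' : (⟨p, hp⟩ : {x // x ∈ T}) ≠ ⟨r, hr⟩ := fun h => hne (congrArg Subtype.val h)
  have a1 : (bipGraph T).Adj (Sum.inl ⟨p, hp⟩) (Sum.inr j₁) := by simp [bipGraph_adj, hj₁]
  have a2 : (bipGraph T).Adj (Sum.inr j₁) (Sum.inl ⟨r, hr⟩) := by simp [bipGraph_adj, hj₁']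
  have a3 : (bipGraph T).Adj (Sum.inl ⟨r, hr⟩) (Sum.inr j₂) := by simp [bipGraph_adj, hj₂']
  have a4 : (bipGraph T).Adj (Sum.inr j₂) (Sum.inl ⟨p, hp⟩) := by simp [bipGraph_adj, hj₂]
  refine hT.2 (SimpleGraph.Walk.cons a1 (SimpleGraph.Walk.cons a2
    (SimpleGraph.Walk.cons a3 (SimpleGraph.Walk.cons a4 SimpleGraph.Walk.nil)))) ?_
  rw [SimpleGraph.Walk.isCycle_def]
  refine ⟨?_, by simp, ?_⟩
  · rw [SimpleGraph.Walk.isTrail_def]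
    simp [hne', hjne, Ne.symm hjne, Ne.symm hne', Sym2.eq_iff]
  · simp [hne', hjne, Ne.symm hjne, Ne.symm hne']

/-! ### `liftBV` basics -/

lemma liftBV_injective : Function.Injective (liftBV (n := n) (m := m)) := by
  rintro ⟨A, B⟩ ⟨C, D⟩ h
  simp only [liftBV, Prod.mk.injEq] at h
  obtain ⟨h1, h2⟩ := h
  have := Finset.image_injective (f := (Fin.castSucc : Fin n → Fin (n+1)))
    (Fin.castSucc_injective n) h1
  simp [this, h2]

lemma last_not_mem_liftBV (p : Finset (Fin n) × Finset (Fin m)) :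
    Fin.last n ∉ (liftBV p).1 := by
  simp only [liftBV, Finset.mem_image]
  rintro ⟨a, _, ha⟩
  exact absurd ha (Fin.castSucc_lt_last a).ne

/-- Downward map. -/
noncomputable def unliftBV (q : Finset (Fin (n+1)) × Finset (Fin m)) : Finset (Fin n) × Finset (Fin m) :=
  (q.1.preimage Fin.castSucc (Fin.castSucc_injective n).injOn, q.2)

lemma image_castSucc_preimage (A : Finset (Fin (n+1))) :
    (A.preimage Fin.castSucc (Fin.castSucc_injective n).injOn).image Fin.castSucc
      = A.erase (Fin.last n) := by
  ext b
  simp only [Finset.mem_image, Finset.mem_preimage, Finset.mem_erase]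
  constructor
  · rintro ⟨a, ha, rfl⟩
    exact ⟨(Fin.castSucc_lt_last a).ne, ha⟩
  · rintro ⟨hb, hbA⟩
    obtain ⟨a, rfl⟩ := Fin.exists_castSucc_eq.2 hb
    exact ⟨a, hbA, rfl⟩

lemma liftBV_unliftBV {q : Finset (Fin (n+1)) × Finset (Fin m)} (h : Fin.last n ∉ q.1) :
    liftBV (unliftBV q) = q := by
  simp only [liftBV, unliftBV, image_castSucc_preimage]
  rw [Finset.erase_eq_self.2 h]

lemma unliftBV_liftBV (p : Finset (Fin n) × Finset (Fin m)) : unliftBV (liftBV p) = p := by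
  have := liftBV_injective (liftBV_unliftBV (q := liftBV p) (last_not_mem_liftBV p))
  exact this

end Part2
section Part3
variable {n m : ℕ}

/-- Attaching the new box to an existing black vertex does not change tree-ness. -/
lemma tree_attach_inr {S : Finset (Finset (Fin n) × Finset (Fin m))}
    {p : Finset (Fin n) × Finset (Fin m)} (hp : p ∈ S) :
    (bipGraph S).IsTree ↔
      (bipGraph (insert (insert (Fin.last n) (p.1.image Fin.castSucc), p.2)
        ((S.erase p).image liftBV))).IsTree := by
  classical
  set q₁ : Finset (Fin (n+1)) × Finset (Fin m) :=
    (insert (Fin.last n) (p.1.image Fin.castSucc), p.2) with hq₁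
  set f : Finset (Fin n) × Finset (Fin m) → Finset (Fin (n+1)) × Finset (Fin m) :=
    fun r => if r = p then q₁ else liftBV r with hf
  have hqlift : ∀ r : Finset (Fin n) × Finset (Fin m), q₁ ≠ liftBV r := by
    intro r h
    exact last_not_mem_liftBV r (h ▸ Finset.mem_insert_self _ _)
  have hinj : Set.InjOn f S := by
    intro a _ b _ hab
    simp only [hf] at hab
    split_ifs at hab with h1 h2 h2
    · exact h1.trans h2.symm
    · exact absurd hab (hqlift b)
    · exact absurd hab.symm (hqlift a)
    · exact liftBV_injective hab
  have himg : S.image f = insert q₁ ((S.erase p).image liftBV) := by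
    conv_lhs => rw [← Finset.insert_erase hp]
    rw [Finset.image_insert]
    congr 1
    · simp [hf]
    · refine Finset.image_congr ?_
      intro r hr
      simp only [Finset.coe_erase, Set.mem_diff, Set.mem_singleton_iff] at hr
      simp [hf, hr.2]
  refine bip_tree_congr (eqvOfImage hinj himg) ?_
  rintro ⟨r, hr⟩
  show (f r).2 = r.2
  simp only [hf]
  split_ifs with h
  · subst h; rfl
  · rfl

/-- The vertex relabelling used when attaching the new box to a circle vertex. -/
def attachInlFun (S : Finset (Finset (Fin n) × Finset (Fin m))) (k : Fin m) :
    Option ({p // p ∈ S} ⊕ Fin m) →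
      ({r // r ∈ insert (({Fin.last n}, {k}) : Finset (Fin (n+1)) × Finset (Fin m))
        (S.image liftBV)} ⊕ Fin m)
  | none => Sum.inl ⟨({Fin.last n}, {k}), Finset.mem_insert_self _ _⟩
  | some (Sum.inl p) => Sum.inl ⟨liftBV p.val,
      Finset.mem_insert_of_mem (Finset.mem_image_of_mem liftBV p.2)⟩
  | some (Sum.inr j) => Sum.inr j

/-- Attaching the new box to a circle vertex `k` via a new two-valent black vertex
does not change tree-ness. -/
lemma tree_attach_inl (hm : 1 ≤ m) (S : Finset (Finset (Fin n) × Finset (Fin m)))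
    (k : Fin m) :
    (bipGraph (insert ({Fin.last n}, {k}) (S.image liftBV))).IsTree ↔
      (bipGraph S).IsTree := by
  classical
  set q₀ : Finset (Fin (n+1)) × Finset (Fin m) := ({Fin.last n}, {k}) with hq₀
  have hqlift : ∀ r : Finset (Fin n) × Finset (Fin m), q₀ ≠ liftBV r := by
    intro r h
    exact last_not_mem_liftBV r (h ▸ Finset.mem_singleton_self _)
  have hbij : Function.Bijective (attachInlFun S k) := by
    constructor
    · rintro (_ | (p | i)) (_ | (q | j)) h <;>
        simp only [attachInlFun, Sum.inl.injEq, Sum.inr.injEq, Subtype.mk.injEq] at h <;>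
        first
          | rfl
          | simp at h
          | exact absurd h (hqlift _)
          | exact absurd h.symm (hqlift _)
          | exact congrArg (some ∘ Sum.inl) (Subtype.ext (liftBV_injective h))
          | exact congrArg (some ∘ Sum.inr) h
    · rintro (⟨r, hr⟩ | j)
      · rcases Finset.mem_insert.1 hr with h | h
        · exact ⟨none, by simp [attachInlFun, h]⟩
        · obtain ⟨p, hpS, hpr⟩ := Finset.mem_image.1 h
          exact ⟨some (Sum.inl ⟨p, hpS⟩), by simp [attachInlFun, hpr]⟩
      · exact ⟨some (Sum.inr j), rfl⟩
  set T := insert q₀ (S.image liftBV) with hT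
  have h1 : ((bipGraph T).comap (attachInlFun S k)).IsTree ↔ (bipGraph T).IsTree :=
    isTree_iff_of_equiv _ _ (Equiv.ofBijective _ hbij) (fun v w => Iff.rfl)
  have hne : Nonempty ({p // p ∈ S} ⊕ Fin m) := ⟨Sum.inr ⟨0, hm⟩⟩
  have h2 : ((bipGraph T).comap (attachInlFun S k)).IsTree ↔ (bipGraph S).IsTree := by
    refine isTree_option_pendant (Sum.inr k) ?_ ?_
    · rintro (p | i) (q | j) <;>
        simp [SimpleGraph.comap, attachInlFun, bipGraph_adj, liftBV]
    · rintro (_ | (p | j)) <;>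
        simp [SimpleGraph.comap, attachInlFun, bipGraph_adj, hq₀, eq_comm]
  exact h1.symm.trans h2

end Part3
section Part4
variable {n m : ℕ}

lemma liftBV_fst_card (p : Finset (Fin n) × Finset (Fin m)) :
    (liftBV p).1.card = p.1.card :=
  Finset.card_image_of_injective _ (Fin.castSucc_injective n)

lemma insert_eq_insert {α : Type*} [DecidableEq α] {q q' : α} {A A' : Finset α}
    (P : α → Prop) (hq : P q) (hq' : P q') (hA : ∀ r ∈ A, ¬ P r) (hA' : ∀ r ∈ A', ¬ P r)
    (h : insert q A = insert q' A') : q = q' ∧ A = A' := by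
  have hqq : q = q' := by
    have hmem : q ∈ insert q' A' := h ▸ Finset.mem_insert_self q A
    rcases Finset.mem_insert.1 hmem with h' | h'
    · exact h'
    · exact absurd hq (hA' _ h')
  subst hqq
  refine ⟨rfl, ?_⟩
  have h1 : (insert q A).erase q = (insert q A').erase q := by rw [h]
  rwa [Finset.erase_insert (fun hqA => hA q hqA hq),
    Finset.erase_insert (fun hqA => hA' q hqA hq')] at h1

lemma mapsTo_attachBox (hm : 1 ≤ m)
    {x : Finset (Finset (Fin n) × Finset (Fin m)) ×
      (Fin m ⊕ (Finset (Fin n) × Finset (Fin m)))}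
    (hx : x.1 ∈ Gset n m ∧ ∀ p, x.2 = Sum.inr p → p ∈ x.1) :
    attachBox x ∈ Gset (n + 1) m := by
  classical
  obtain ⟨S, c⟩ := x
  obtain ⟨⟨hval, hdisj, hun, htree⟩, hc⟩ := hx
  have hliftval : ∀ p : Finset (Fin n) × Finset (Fin m), p ∈ S →
      2 ≤ (liftBV p).1.card + (liftBV p).2.card := by
    intro p hp
    rw [liftBV_fst_card]
    exact hval p hp
  have hliftdisj : ∀ a ∈ S, ∀ b ∈ S, a ≠ b →
      Disjoint (liftBV a).1 (liftBV b).1 := by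
    intro a ha b hb hab
    simp only [liftBV]
    rw [Finset.disjoint_image (Fin.castSucc_injective n)]
    exact hdisj ha hb hab
  match c with
  | Sum.inl k =>
    simp only [attachBox]
    refine ⟨?_, ?_, ?_, ?_⟩
    · -- valence
      intro r hr
      rcases Finset.mem_insert.1 hr with rfl | hr
      · simp
      · obtain ⟨p, hp, rfl⟩ := Finset.mem_image.1 hr
        exact hliftval p hp
    · -- pairwise disjoint
      intro a ha b hb hab
      simp only [Finset.coe_insert, Set.mem_insert_iff, Finset.mem_coe] at ha hb
      simp only [Function.onFun]
      rcases ha with rfl | ha <;> rcases hb with rfl | hb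
      · exact absurd rfl hab
      · obtain ⟨p, hp, rfl⟩ := Finset.mem_image.1 hb
        simp only [Finset.disjoint_singleton_left]
        exact last_not_mem_liftBV p
      · obtain ⟨p, hp, rfl⟩ := Finset.mem_image.1 ha
        simp only [Finset.disjoint_singleton_right]
        exact last_not_mem_liftBV p
      · obtain ⟨p, hp, rfl⟩ := Finset.mem_image.1 ha
        obtain ⟨p', hp', rfl⟩ := Finset.mem_image.1 hb
        exact hliftdisj p hp p' hp' (fun h => hab (by rw [h]))
    · -- biUnion
      ext y
      simp only [Finset.mem_biUnion, Finset.mem_univ, iff_true]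
      by_cases hy : y = Fin.last n
      · exact ⟨({Fin.last n}, {k}), Finset.mem_insert_self _ _, by simp [hy]⟩
      · obtain ⟨z, rfl⟩ := Fin.exists_castSucc_eq.2 hy
        have : z ∈ S.biUnion Prod.fst := hun ▸ Finset.mem_univ z
        obtain ⟨p, hp, hz⟩ := Finset.mem_biUnion.1 this
        exact ⟨liftBV p, Finset.mem_insert_of_mem (Finset.mem_image_of_mem _ hp),
          Finset.mem_image_of_mem _ hz⟩
    · exact (tree_attach_inl hm S k).2 htree
  | Sum.inr p =>
    have hp : p ∈ S := hc p rfl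
    have hlastp : Fin.last n ∉ p.1.image Fin.castSucc := last_not_mem_liftBV p
    simp only [attachBox]
    refine ⟨?_, ?_, ?_, ?_⟩
    · intro r hr
      rcases Finset.mem_insert.1 hr with rfl | hr
      · simp only [Finset.card_insert_of_notMem hlastp]
        have := hval p hp
        have hcards : (p.1.image Fin.castSucc).card = p.1.card :=
          Finset.card_image_of_injective _ (Fin.castSucc_injective n)
        omega
      · obtain ⟨r', hr', rfl⟩ := Finset.mem_image.1 hr
        exact hliftval r' (Finset.mem_of_mem_erase hr')
    · intro a ha b hb hab
      simp only [Finset.coe_insert, Set.mem_insert_iff, Finset.mem_coe] at ha hb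
      simp only [Function.onFun]
      rcases ha with rfl | ha <;> rcases hb with rfl | hb
      · exact absurd rfl hab
      · obtain ⟨r, hr, rfl⟩ := Finset.mem_image.1 hb
        have hrS := Finset.mem_of_mem_erase hr
        have hrp := Finset.ne_of_mem_erase hr
        simp only [Finset.disjoint_insert_left]
        refine ⟨last_not_mem_liftBV r, ?_⟩
        have := hliftdisj p hp r hrS (Ne.symm hrp)
        simpa [liftBV] using this
      · obtain ⟨r, hr, rfl⟩ := Finset.mem_image.1 ha
        have hrS := Finset.mem_of_mem_erase hr
        have hrp := Finset.ne_of_mem_erase hr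
        simp only [Finset.disjoint_insert_right]
        refine ⟨last_not_mem_liftBV r, ?_⟩
        have := hliftdisj r hrS p hp hrp
        simpa [liftBV] using this
      · obtain ⟨r, hr, rfl⟩ := Finset.mem_image.1 ha
        obtain ⟨r', hr', rfl⟩ := Finset.mem_image.1 hb
        exact hliftdisj r (Finset.mem_of_mem_erase hr) r' (Finset.mem_of_mem_erase hr')
          (fun h => hab (by rw [h]))
    · ext y
      simp only [Finset.mem_biUnion, Finset.mem_univ, iff_true]
      by_cases hy : y = Fin.last n
      · exact ⟨_, Finset.mem_insert_self _ _, by simp [hy]⟩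
      · obtain ⟨z, rfl⟩ := Fin.exists_castSucc_eq.2 hy
        have : z ∈ S.biUnion Prod.fst := hun ▸ Finset.mem_univ z
        obtain ⟨r, hr, hz⟩ := Finset.mem_biUnion.1 this
        by_cases hrp : r = p
        · subst hrp
          exact ⟨_, Finset.mem_insert_self _ _,
            Finset.mem_insert_of_mem (Finset.mem_image_of_mem _ hz)⟩
        · exact ⟨liftBV r, Finset.mem_insert_of_mem
            (Finset.mem_image_of_mem _ (Finset.mem_erase.2 ⟨hrp, hr⟩)),
            Finset.mem_image_of_mem _ hz⟩
    · exact (tree_attach_inr hp).1 htree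

end Part4
section Part5
variable {n m : ℕ}

/-- The element inserted by `attachBox` always contains `Fin.last n`, and the other
elements never do. -/
lemma attachBox_eq_analysis {S S' : Finset (Finset (Fin n) × Finset (Fin m))}
    {q q' : Finset (Fin (n+1)) × Finset (Fin m)}
    (hq : Fin.last n ∈ q.1) (hq' : Fin.last n ∈ q'.1)
    {A A' : Finset (Finset (Fin (n+1)) × Finset (Fin m))}
    (hA : A = S.image liftBV ∨ ∃ p, A = (S.erase p).image liftBV)
    (hA' : A' = S'.image liftBV ∨ ∃ p, A' = (S'.erase p).image liftBV)
    (h : insert q A = insert q' A') : q = q' ∧ A = A' := by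
  refine insert_eq_insert (fun r => Fin.last n ∈ r.1) hq hq' ?_ ?_ h
  · intro r hr
    rcases hA with rfl | ⟨p, rfl⟩ <;>
    · obtain ⟨s, _, rfl⟩ := Finset.mem_image.1 hr
      exact last_not_mem_liftBV s
  · intro r hr
    rcases hA' with rfl | ⟨p, rfl⟩ <;>
    · obtain ⟨s, _, rfl⟩ := Finset.mem_image.1 hr
      exact last_not_mem_liftBV s

lemma injOn_attachBox :
    Set.InjOn (attachBox (n := n) (m := m))
      {x | x.1 ∈ Gset n m ∧ ∀ p, x.2 = Sum.inr p → p ∈ x.1} := by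
  classical
  rintro ⟨S, c⟩ hx ⟨S', c'⟩ hx' h
  have himg_inj : Function.Injective
      (Finset.image (liftBV (n := n) (m := m))) :=
    Finset.image_injective liftBV_injective
  match c, c' with
  | Sum.inl k, Sum.inl k' =>
    simp only [attachBox] at h
    obtain ⟨hq, hA⟩ := attachBox_eq_analysis (by simp) (by simp)
      (Or.inl rfl) (Or.inl rfl) h
    obtain ⟨h1, h2⟩ := Prod.mk.injEq .. ▸ hq
    have hk : k = k' := by
      have := Finset.mem_singleton.1 (h2 ▸ Finset.mem_singleton_self k)
      exact this
    have hS : S = S' := himg_inj hA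
    rw [hk, hS]
  | Sum.inl k, Sum.inr p =>
    exfalso
    simp only [attachBox] at h
    obtain ⟨hq, -⟩ := attachBox_eq_analysis (q := ({Fin.last n}, {k}))
      (by simp) (by simp) (Or.inl rfl) (Or.inr ⟨p, rfl⟩) h
    have hp : p ∈ S' := hx'.2 p rfl
    have hval := hx'.1.1 p hp
    have h1 : ({Fin.last n} : Finset (Fin (n+1)))
        = insert (Fin.last n) (p.1.image Fin.castSucc) := congrArg Prod.fst hq
    have hsub : p.1.image Fin.castSucc ⊆ {Fin.last n} := by
      rw [h1]; exact (Finset.subset_insert _ _).trans (by rw [← h1])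
    have hempty : p.1 = ∅ := by
      by_contra hne
      obtain ⟨a, ha⟩ := Finset.nonempty_iff_ne_empty.2 hne
      have := Finset.mem_singleton.1 (hsub (Finset.mem_image_of_mem _ ha))
      exact (Fin.castSucc_lt_last a).ne this
    have h2 : ({k} : Finset (Fin m)) = p.2 := congrArg Prod.snd hq
    rw [hempty, ← h2] at hval
    simp at hval
  | Sum.inr p, Sum.inl k =>
    exfalso
    simp only [attachBox] at h
    obtain ⟨hq, -⟩ := attachBox_eq_analysis (q' := ({Fin.last n}, {k}))
      (by simp) (by simp) (Or.inr ⟨p, rfl⟩) (Or.inl rfl) h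
    replace hq := hq.symm
    have hp : p ∈ S := hx.2 p rfl
    have hval := hx.1.1 p hp
    have h1 : ({Fin.last n} : Finset (Fin (n+1)))
        = insert (Fin.last n) (p.1.image Fin.castSucc) := congrArg Prod.fst hq
    have hsub : p.1.image Fin.castSucc ⊆ {Fin.last n} := by
      rw [h1]; exact (Finset.subset_insert _ _).trans (by rw [← h1])
    have hempty : p.1 = ∅ := by
      by_contra hne
      obtain ⟨a, ha⟩ := Finset.nonempty_iff_ne_empty.2 hne
      have := Finset.mem_singleton.1 (hsub (Finset.mem_image_of_mem _ ha))
      exact (Fin.castSucc_lt_last a).ne this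
    have h2 : ({k} : Finset (Fin m)) = p.2 := congrArg Prod.snd hq
    rw [hempty, ← h2] at hval
    simp at hval
  | Sum.inr p, Sum.inr p' =>
    have hp : p ∈ S := hx.2 p rfl
    have hp' : p' ∈ S' := hx'.2 p' rfl
    simp only [attachBox] at h
    obtain ⟨hq, hA⟩ := attachBox_eq_analysis (by simp) (by simp)
      (Or.inr ⟨p, rfl⟩) (Or.inr ⟨p', rfl⟩) h
    have h1 : insert (Fin.last n) (p.1.image Fin.castSucc)
        = insert (Fin.last n) (p'.1.image Fin.castSucc) := congrArg Prod.fst hq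
    have hfst : p.1.image Fin.castSucc = p'.1.image Fin.castSucc := by
      have e1 := Finset.erase_insert (last_not_mem_liftBV p)
      have e2 := Finset.erase_insert (last_not_mem_liftBV p')
      calc p.1.image Fin.castSucc
          = (insert (Fin.last n) (p.1.image Fin.castSucc)).erase (Fin.last n) := e1.symm
        _ = (insert (Fin.last n) (p'.1.image Fin.castSucc)).erase (Fin.last n) := by rw [h1]
        _ = p'.1.image Fin.castSucc := e2
    have hppfst : p.1 = p'.1 := Finset.image_injective (Fin.castSucc_injective n) hfst
    have hppsnd : p.2 = p'.2 := (Prod.ext_iff.1 hq).2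
    have hpp : p = p' := Prod.ext hppfst hppsnd
    subst hpp
    have hSS : S.erase p = S'.erase p := himg_inj hA
    have hS : S = S' := by
      rw [← Finset.insert_erase hp, ← Finset.insert_erase hp', hSS]
    rw [hS]

end Part5
section Part6
variable {n m : ℕ}

lemma unliftBV_fst_card {r : Finset (Fin (n+1)) × Finset (Fin m)}
    (h : Fin.last n ∉ r.1) : (unliftBV r).1.card = r.1.card := by
  have h1 : ((unliftBV r).1.image Fin.castSucc).card = (unliftBV r).1.card :=
    Finset.card_image_of_injective _ (Fin.castSucc_injective n)
  have h2 : (liftBV (unliftBV r)) = r := liftBV_unliftBV h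
  rw [← h1]
  congr 1
  exact congrArg Prod.fst h2

lemma surjOn_attachBox (hm : 1 ≤ m) :
    Set.SurjOn (attachBox (n := n) (m := m))
      {x | x.1 ∈ Gset n m ∧ ∀ p, x.2 = Sum.inr p → p ∈ x.1}
      (Gset (n + 1) m) := by
  classical
  rintro T ⟨hval, hdisj, hun, htree⟩
  -- the unique element of T whose first component contains `last n`
  have hlast : Fin.last n ∈ T.biUnion Prod.fst := hun ▸ Finset.mem_univ _
  obtain ⟨q, hqT, hqlast⟩ := Finset.mem_biUnion.1 hlast
  have hother : ∀ r ∈ T, r ≠ q → Fin.last n ∉ r.1 := by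
    intro r hr hrq hlast'
    exact Finset.disjoint_left.1 (hdisj hr hqT hrq) hlast' hqlast
  have hlift_erase : (T.erase q).image (fun r => liftBV (unliftBV r)) = T.erase q := by
    rw [Finset.image_congr (g := id), Finset.image_id]
    intro r hr
    simp only [Finset.coe_erase, Set.mem_diff, Set.mem_singleton_iff, Finset.mem_coe] at hr
    exact liftBV_unliftBV (hother r hr.1 hr.2)
  -- common facts about S₀ := (T.erase q).image unliftBV
  set S₀ := (T.erase q).image unliftBV with hS₀
  have hS₀lift : S₀.image liftBV = T.erase q := by
    rw [hS₀, Finset.image_image]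
    exact hlift_erase
  have hS₀mem : ∀ s ∈ S₀, ∃ r ∈ T, r ≠ q ∧ s = unliftBV r ∧ liftBV s = r := by
    intro s hs
    obtain ⟨r, hr, rfl⟩ := Finset.mem_image.1 hs
    have h1 := Finset.mem_erase.1 hr
    exact ⟨r, h1.2, h1.1, rfl, liftBV_unliftBV (hother r h1.2 h1.1)⟩
  have hS₀val : ∀ s ∈ S₀, 2 ≤ s.1.card + s.2.card := by
    intro s hs
    obtain ⟨r, hrT, hrq, rfl, -⟩ := hS₀mem s hs
    rw [unliftBV_fst_card (hother r hrT hrq)]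
    exact hval r hrT
  have hS₀disj : (S₀ : Set (Finset (Fin n) × Finset (Fin m))).PairwiseDisjoint Prod.fst := by
    intro a ha b hb hab
    simp only [Finset.mem_coe] at ha hb
    obtain ⟨r, hrT, hrq, rfl, hl1⟩ := hS₀mem a ha
    obtain ⟨r', hrT', hrq', rfl, hl2⟩ := hS₀mem b hb
    have hrr : r ≠ r' := fun h => hab (by rw [h])
    have hd := hdisj hrT hrT' hrr
    simp only [Function.onFun]
    rw [Finset.disjoint_left]
    intro y hy1 hy2
    have m1 : Fin.castSucc y ∈ r.1 := by
      have : Fin.castSucc y ∈ (liftBV (unliftBV r)).1 :=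
        Finset.mem_image_of_mem _ hy1
      rwa [hl1] at this
    have m2 : Fin.castSucc y ∈ r'.1 := by
      have : Fin.castSucc y ∈ (liftBV (unliftBV r')).1 :=
        Finset.mem_image_of_mem _ hy2
      rwa [hl2] at this
    exact Finset.disjoint_left.1 hd m1 m2
  have hq2 : q.2.Nonempty := snd_nonempty_of_tree hm htree q hqT
  by_cases hcase : q.1 = {Fin.last n} ∧ q.2.card = 1
  · -- attach to a circle vertex
    obtain ⟨hq1, hq2c⟩ := hcase
    obtain ⟨k, hk⟩ := Finset.card_eq_one.1 hq2c
    have hqeq : q = ({Fin.last n}, {k}) := Prod.ext hq1 hk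
    refine ⟨(S₀, Sum.inl k), ⟨⟨hS₀val, hS₀disj, ?_, ?_⟩, by simp⟩, ?_⟩
    · -- biUnion
      ext y
      simp only [Finset.mem_biUnion, Finset.mem_univ, iff_true]
      have : Fin.castSucc y ∈ T.biUnion Prod.fst := hun ▸ Finset.mem_univ _
      obtain ⟨r, hrT, hy⟩ := Finset.mem_biUnion.1 this
      have hrq : r ≠ q := by
        rintro rfl
        rw [hq1] at hy
        exact (Fin.castSucc_lt_last y).ne (Finset.mem_singleton.1 hy)
      refine ⟨unliftBV r, Finset.mem_image_of_mem _ (Finset.mem_erase.2 ⟨hrq, hrT⟩), ?_⟩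
      simp only [unliftBV, Finset.mem_preimage]
      exact hy
    · -- tree
      refine (tree_attach_inl hm S₀ k).1 ?_
      rw [hS₀lift, ← hqeq, Finset.insert_erase hqT]
      exact htree
    · -- image equation
      simp only [attachBox]
      rw [hS₀lift, ← hqeq, Finset.insert_erase hqT]
  · -- attach to an existing black vertex
    set p := unliftBV (q.1.erase (Fin.last n), q.2) with hpdef
    have hplift : liftBV p = (q.1.erase (Fin.last n), q.2) :=
      liftBV_unliftBV (by simp)
    have hpfst : p.1.image Fin.castSucc = q.1.erase (Fin.last n) :=
      congrArg Prod.fst hplift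
    have hpsnd : p.2 = q.2 := rfl
    have hq1restore : insert (Fin.last n) (p.1.image Fin.castSucc) = q.1 := by
      rw [hpfst, Finset.insert_erase hqlast]
    have hq1card : q.1 = {Fin.last n} → 2 ≤ q.2.card := by
      intro h1
      have hpos : 1 ≤ q.2.card := Finset.card_pos.2 hq2
      by_contra hlt
      push_neg at hlt
      exact hcase ⟨h1, by omega⟩
    -- p is not among the lifted elements
    have hpnot : p ∉ S₀ := by
      intro hpS
      obtain ⟨r, hrT, hrq, -, hrlift⟩ := hS₀mem p hpS
      rw [hplift] at hrlift
      have hr1 : r.1 = q.1.erase (Fin.last n) := (congrArg Prod.fst hrlift).symm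
      have hr2 : r.2 = q.2 := (congrArg Prod.snd hrlift).symm
      have hd := hdisj hrT hqT hrq
      have hempty : q.1.erase (Fin.last n) = ∅ := by
        rw [← hr1]
        rw [Finset.eq_empty_iff_forall_notMem]
        intro y hy
        exact Finset.disjoint_left.1 hd hy (hr1 ▸ hy |> Finset.mem_of_mem_erase)
      have hq1 : q.1 = {Fin.last n} := by
        have := Finset.insert_erase hqlast
        rw [hempty] at this
        simp at this
        exact this.symm
      have hrval := hval r hrT
      rw [hr1, hempty, hr2] at hrval
      simp only [Finset.card_empty, Nat.zero_add] at hrval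
      exact snd_ne_of_tree htree hqT hrT (Ne.symm hrq) (hr2.symm) (hq1card hq1 )
    refine ⟨(insert p S₀, Sum.inr p), ⟨⟨?_, ?_, ?_, ?_⟩, ?_⟩, ?_⟩
    · -- valence
      intro s hs
      rcases Finset.mem_insert.1 hs with rfl | hs
      · -- valence of p
        have hc1 : p.1.card = q.1.card - 1 := by
          have : (p.1.image Fin.castSucc).card = p.1.card :=
            Finset.card_image_of_injective _ (Fin.castSucc_injective n)
          rw [← this, hpfst, Finset.card_erase_of_mem hqlast]
        rcases Nat.lt_or_ge q.1.card 2 with h | h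
        · have hq1 : q.1 = {Fin.last n} := by
            have : q.1.card = 1 := by
              have : 1 ≤ q.1.card := Finset.card_pos.2 ⟨_, hqlast⟩
              omega
            obtain ⟨a, ha⟩ := Finset.card_eq_one.1 this
            rw [ha]
            rw [ha] at hqlast
            rw [Finset.mem_singleton.1 hqlast]
          have := hq1card hq1
          rw [hpsnd]
          omega
        · have h2 : 1 ≤ q.2.card := Finset.card_pos.2 hq2
          rw [hpsnd]
          omega
      · exact hS₀val s hs
    · -- pairwise disjoint
      intro a ha b hb hab
      simp only [Finset.coe_insert, Set.mem_insert_iff, Finset.mem_coe] at ha hb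
      have key : ∀ s ∈ S₀, Disjoint p.1 s.1 := by
        intro s hs
        obtain ⟨r, hrT, hrq, rfl, hl⟩ := hS₀mem s hs
        rw [Finset.disjoint_left]
        intro y hy1 hy2
        have m1 : Fin.castSucc y ∈ q.1 := by
          have : Fin.castSucc y ∈ p.1.image Fin.castSucc := Finset.mem_image_of_mem _ hy1
          rw [hpfst] at this
          exact Finset.mem_of_mem_erase this
        have m2 : Fin.castSucc y ∈ r.1 := by
          have : Fin.castSucc y ∈ (liftBV (unliftBV r)).1 := Finset.mem_image_of_mem _ hy2
          rwa [hl] at this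
        exact Finset.disjoint_left.1 (hdisj hqT hrT (Ne.symm hrq)) m1 m2
      simp only [Function.onFun]
      rcases ha with rfl | ha <;> rcases hb with rfl | hb
      · exact absurd rfl hab
      · exact key b hb
      · exact (key a ha).symm
      · exact hS₀disj ha hb hab
    · -- biUnion
      ext y
      simp only [Finset.mem_biUnion, Finset.mem_univ, iff_true]
      have : Fin.castSucc y ∈ T.biUnion Prod.fst := hun ▸ Finset.mem_univ _
      obtain ⟨r, hrT, hy⟩ := Finset.mem_biUnion.1 this
      by_cases hrq : r = q
      · rw [hrq] at hy
        refine ⟨p, Finset.mem_insert_self _ _, ?_⟩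
        have : Fin.castSucc y ∈ q.1.erase (Fin.last n) :=
          Finset.mem_erase.2 ⟨(Fin.castSucc_lt_last y).ne, hy⟩
        rw [← hpfst] at this
        obtain ⟨z, hz, hzy⟩ := Finset.mem_image.1 this
        rwa [← Fin.castSucc_injective n hzy]
      · refine ⟨unliftBV r, Finset.mem_insert_of_mem
          (Finset.mem_image_of_mem _ (Finset.mem_erase.2 ⟨hrq, hrT⟩)), ?_⟩
        simp only [unliftBV, Finset.mem_preimage]
        exact hy
    · -- tree
      refine (tree_attach_inr (Finset.mem_insert_self p S₀)).2 ?_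
      rw [Finset.erase_insert hpnot, hS₀lift]
      have : (insert (Fin.last n) (p.1.image Fin.castSucc), p.2) = q := by
        rw [hq1restore, hpsnd]
      rw [this, Finset.insert_erase hqT]
      exact htree
    · -- domain condition
      intro r hr
      cases hr
      exact Finset.mem_insert_self _ _
    · -- image equation
      simp only [attachBox]
      rw [Finset.erase_insert hpnot, hS₀lift]
      have : (insert (Fin.last n) (p.1.image Fin.castSucc), p.2) = q := by
        rw [hq1restore, hpsnd]
      rw [this, Finset.insert_erase hqT]

end Part6

theorem Gset_succ_box_bij (n m : ℕ) (hm : 1 ≤ m) :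
    Set.BijOn attachBox
      {x : Finset (Finset (Fin n) × Finset (Fin m)) ×
          (Fin m ⊕ (Finset (Fin n) × Finset (Fin m))) |
        x.1 ∈ Gset n m ∧ ∀ p, x.2 = Sum.inr p → p ∈ x.1}
      (Gset (n + 1) m)
    ∧ (Gset (n + 1) m).ncard
        = ∑ S ∈ (Set.toFinite (Gset n m)).toFinset, (m + S.card) := by
  classical
  set D : Set (Finset (Finset (Fin n) × Finset (Fin m)) ×
      (Fin m ⊕ (Finset (Fin n) × Finset (Fin m)))) :=
    {x | x.1 ∈ Gset n m ∧ ∀ p, x.2 = Sum.inr p → p ∈ x.1} with hDdef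
  have hbij : Set.BijOn attachBox D (Gset (n + 1) m) :=
    ⟨fun x hx => mapsTo_attachBox hm hx, injOn_attachBox, surjOn_attachBox hm⟩
  refine ⟨hbij, ?_⟩
  set Gfin := (Set.toFinite (Gset n m)).toFinset with hGfin
  set Dfin := Gfin.biUnion (fun S => {S} ×ˢ
      ((Finset.univ.image (Sum.inl : Fin m → Fin m ⊕ (Finset (Fin n) × Finset (Fin m)))) ∪
        (S.image Sum.inr))) with hDfin
  have hD : D = ↑Dfin := by
    ext ⟨S, c⟩
    simp only [hDdef, Set.mem_setOf_eq, hDfin, Finset.coe_biUnion, Set.mem_iUnion,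
      Finset.mem_coe, Finset.mem_biUnion, hGfin, Set.Finite.mem_toFinset,
      Finset.mem_product, Finset.mem_singleton, Finset.mem_union, Finset.mem_image,
      Finset.mem_univ, true_and]
    constructor
    · rintro ⟨hS, hc⟩
      refine ⟨S, hS, rfl, ?_⟩
      match c with
      | Sum.inl k => exact Or.inl ⟨k, rfl⟩
      | Sum.inr p => exact Or.inr ⟨p, hc p rfl, rfl⟩
    · rintro ⟨S', hS', rfl, hc⟩
      refine ⟨hS', ?_⟩
      rintro p rfl
      rcases hc with ⟨k, hk⟩ | ⟨p', hp', hpp⟩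
      · exact absurd hk (by simp)
      · cases hpp
        exact hp'
  have h1 : (Gset (n + 1) m).ncard = D.ncard := by
    rw [← hbij.image_eq, Set.ncard_image_of_injOn hbij.injOn]
  rw [h1, hD, Set.ncard_coe_finset]
  rw [hDfin, Finset.card_biUnion]
  · refine Finset.sum_congr rfl ?_
    intro S _
    rw [Finset.card_product, Finset.card_singleton, one_mul,
      Finset.card_union_of_disjoint, Finset.card_image_of_injective _ Sum.inl_injective,
      Finset.card_image_of_injective _ Sum.inr_injective, Finset.card_univ,
      Fintype.card_fin]
    rw [Finset.disjoint_left]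
    rintro c hc1 hc2
    obtain ⟨k, -, rfl⟩ := Finset.mem_image.1 hc1
    obtain ⟨p, -, hp⟩ := Finset.mem_image.1 hc2
    exact absurd hp (by simp)
  · intro a _ b _ hab
    rw [Function.onFun, Finset.disjoint_left]
    rintro x hx1 hx2
    rw [Finset.mem_product, Finset.mem_singleton] at hx1 hx2
    exact hab (hx1.1 ▸ hx2.1 ▸ rfl)
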